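/- Let ν ∈ (0,1), let w(x) = 2(1−ν)x on [0,ν] and w(x) = 2ν(1−x) on [ν,1]. For every continuous function P on [0,1] which is a polynomial of degree ≤ p on [0,ν] and a polynomial of degree ≤ p on [ν,1], there exist unique coefficients α₀,…,α_p and β₀,…,β_p with β_p = 0 such that P(x) = Σ_{j=0}^{p} (α_j x^j + β_j w(x) x^j) for all x ∈ [0,1]. -/

import Mathlib

open Finset

open Polynomial in
/-- Evaluation of a polynomial of small degree as a `Fin` sum of its coefficients. -/
private lemma sgfem_eval_fin (p : ℕ) (q : ℝ[X]) (hq : q.natDegree < p + 1) (x : ℝ) :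
    ∑ j : Fin (p+1), q.coeff (j : ℕ) * x ^ (j : ℕ) = q.eval x := by
  rw [Polynomial.eval_eq_sum_range' hq, Fin.sum_univ_eq_sum_range (fun j => q.coeff j * x ^ j)]

open Polynomial in
private lemma sgfem_coeff_fin (p : ℕ) (γ : Fin (p+1) → ℝ) (j : Fin (p+1)) :
    (∑ i : Fin (p+1), C (γ i) * X ^ (i : ℕ)).coeff (j : ℕ) = γ j := by
  rw [Polynomial.finset_sum_coeff]
  rw [Finset.sum_eq_single j]
  · simp
  · intro i _ hij
    simp only [Polynomial.coeff_C_mul, Polynomial.coeff_X_pow]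
    rw [if_neg (fun h => hij (Fin.val_injective h.symm)), mul_zero]
  · simp

theorem sgfem_local_interpolant (p : ℕ) (hp : 1 ≤ p) (ν : ℝ)
    (hν : ν ∈ Set.Ioo (0:ℝ) 1)
    (w : ℝ → ℝ)
    (hw : ∀ x : ℝ, w x = if x ≤ ν then 2 * (1 - ν) * x else 2 * ν * (1 - x))
    (P : ℝ → ℝ) (hP : ContinuousOn P (Set.Icc 0 1))
    (a b : ℕ → ℝ)
    (hP0 : ∀ x ∈ Set.Icc (0:ℝ) ν, P x = ∑ l ∈ Finset.range (p+1), a l * x ^ l)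
    (hP1 : ∀ x ∈ Set.Icc ν (1:ℝ), P x = ∑ l ∈ Finset.range (p+1), b l * x ^ l) :
    ∃! c : (Fin (p+1) → ℝ) × (Fin (p+1) → ℝ),
      c.2 (Fin.last p) = 0 ∧
      ∀ x ∈ Set.Icc (0:ℝ) 1,
        P x = ∑ j : Fin (p+1), (c.1 j * x ^ (j : ℕ) + c.2 j * w x * x ^ (j : ℕ)) := by
  classical
  open Polynomial in
  obtain ⟨hν0, hν1⟩ := hν
  set A : ℝ[X] := ∑ l ∈ Finset.range (p+1), C (a l) * X ^ l with hAdef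
  set B : ℝ[X] := ∑ l ∈ Finset.range (p+1), C (b l) * X ^ l with hBdef
  have hAeval : ∀ x : ℝ, A.eval x = ∑ l ∈ Finset.range (p+1), a l * x ^ l := by
    intro x; simp [hAdef, Polynomial.eval_finset_sum]
  have hBeval : ∀ x : ℝ, B.eval x = ∑ l ∈ Finset.range (p+1), b l * x ^ l := by
    intro x; simp [hBdef, Polynomial.eval_finset_sum]
  have hdegA : A.natDegree ≤ p := by
    apply Polynomial.natDegree_sum_le_of_forall_le
    intro i hi
    refine (Polynomial.natDegree_C_mul_le _ _).trans ?_
    simpa using Nat.lt_succ_iff.mp (Finset.mem_range.mp hi)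
  have hdegB : B.natDegree ≤ p := by
    apply Polynomial.natDegree_sum_le_of_forall_le
    intro i hi
    refine (Polynomial.natDegree_C_mul_le _ _).trans ?_
    simpa using Nat.lt_succ_iff.mp (Finset.mem_range.mp hi)
  -- continuity across the break: A(ν) = B(ν)
  have hcont : A.eval ν = B.eval ν := by
    rw [hAeval, hBeval, ← hP0 ν ⟨le_of_lt hν0, le_refl ν⟩, ← hP1 ν ⟨le_refl ν, le_of_lt hν1⟩]
  have hdvd : (X - C ν) ∣ (A - B) := by
    rw [Polynomial.dvd_iff_isRoot]
    simp [Polynomial.IsRoot, hcont]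
  obtain ⟨R0, hR0⟩ := hdvd
  set R : ℝ[X] := C (2⁻¹ : ℝ) * R0 with hRdef
  have h2 : (2 : ℝ[X]) * C (2⁻¹ : ℝ) = 1 := by
    rw [show (2 : ℝ[X]) = C (2 : ℝ) from (map_ofNat C 2).symm, ← C_mul]
    norm_num
  have key : 2 * (X - C ν) * R = A - B := by
    calc 2 * (X - C ν) * (C (2⁻¹:ℝ) * R0)
        = (2 * C (2⁻¹:ℝ)) * ((X - C ν) * R0) := by ring
      _ = (X - C ν) * R0 := by rw [h2, one_mul]
      _ = A - B := hR0.symm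
  have hXν : (X - C ν : ℝ[X]) ≠ 0 := Polynomial.X_sub_C_ne_zero ν
  have hdegR0 : R0.natDegree < p := by
    by_cases h0 : R0 = 0
    · simpa [h0] using Nat.succ_le_iff.mp hp
    · have hAB : (A - B).natDegree ≤ p :=
        (Polynomial.natDegree_sub_le A B).trans (by simp [hdegA, hdegB])
      have := Polynomial.natDegree_mul hXν h0
      rw [hR0, this, Polynomial.natDegree_X_sub_C] at hAB
      omega
  have hdegR : R.natDegree < p :=
    lt_of_le_of_lt (Polynomial.natDegree_C_mul_le _ _) hdegR0
  set Q : ℝ[X] := A - 2 * (1 - C ν) * (X * R) with hQdef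
  have hdegQ : Q.natDegree < p + 1 := by
    refine Nat.lt_succ_of_le ((Polynomial.natDegree_sub_le _ _).trans (max_le hdegA ?_))
    refine (Polynomial.natDegree_mul_le).trans ?_
    have h1 : (2 * (1 - C ν) : ℝ[X]).natDegree ≤ 0 := by
      refine (Polynomial.natDegree_mul_le).trans ?_
      have : ((1 : ℝ[X]) - C ν).natDegree ≤ 0 :=
        (Polynomial.natDegree_sub_le _ _).trans (by simp)
      simpa using this
    have h2' : (X * R : ℝ[X]).natDegree ≤ 1 + R.natDegree := by
      refine (Polynomial.natDegree_mul_le).trans ?_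
      simp
    omega
  have hQB : Q + 2 * C ν * ((1 - X) * R) = B := by
    have : Q + 2 * C ν * ((1 - X) * R) = A - (2 * (X - C ν) * R) := by
      rw [hQdef]; ring
    rw [this, key]; ring
  -- the candidate coefficients
  refine ⟨(fun j => Q.coeff (j : ℕ), fun j => R.coeff (j : ℕ)), ⟨?_, ?_⟩, ?_⟩
  · simpa [Fin.val_last] using Polynomial.coeff_eq_zero_of_natDegree_lt hdegR
  · intro x hx
    have hsum : ∑ j : Fin (p+1),
        (Q.coeff (j:ℕ) * x ^ (j:ℕ) + R.coeff (j:ℕ) * w x * x ^ (j:ℕ))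
        = Q.eval x + w x * R.eval x := by
      rw [Finset.sum_add_distrib, sgfem_eval_fin p Q hdegQ x]
      congr 1
      rw [← sgfem_eval_fin p R (lt_of_lt_of_le hdegR (Nat.le_succ p)) x, Finset.mul_sum]
      exact Finset.sum_congr rfl fun j _ => by ring
    rw [hsum]
    rcases le_or_gt x ν with hxν | hxν
    · have hPx : P x = A.eval x := by rw [hAeval]; exact hP0 x ⟨hx.1, hxν⟩
      have hwx : w x = 2 * (1 - ν) * x := by rw [hw x, if_pos hxν]
      have hQx : Q.eval x = A.eval x - 2 * (1 - ν) * (x * R.eval x) := by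
        simp [hQdef]
      rw [hPx, hwx, hQx]; ring
    · have hPx : P x = B.eval x := by rw [hBeval]; exact hP1 x ⟨le_of_lt hxν, hx.2⟩
      have hwx : w x = 2 * ν * (1 - x) := by rw [hw x, if_neg (not_le.mpr hxν)]
      have hBev : B.eval x = Q.eval x + 2 * ν * ((1 - x) * R.eval x) := by
        rw [← hQB]; simp
      rw [hPx, hBev, hwx]; ring
  -- uniqueness
  · rintro ⟨α, β⟩ ⟨hβp, hrep⟩
    set Q' : ℝ[X] := ∑ j : Fin (p+1), C (α j) * X ^ (j : ℕ) with hQ'def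
    set R' : ℝ[X] := ∑ j : Fin (p+1), C (β j) * X ^ (j : ℕ) with hR'def
    have hQ'eval : ∀ x : ℝ, Q'.eval x = ∑ j : Fin (p+1), α j * x ^ (j:ℕ) := by
      intro x; simp [hQ'def, Polynomial.eval_finset_sum]
    have hR'eval : ∀ x : ℝ, R'.eval x = ∑ j : Fin (p+1), β j * x ^ (j:ℕ) := by
      intro x; simp [hR'def, Polynomial.eval_finset_sum]
    have E0 : A = Q' + 2 * (1 - C ν) * (X * R') := by
      have hroots : Set.Icc (0:ℝ) ν ⊆ {x | (A - (Q' + 2 * (1 - C ν) * (X * R'))).IsRoot x} := by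
        intro x hxI
        have hx01 : x ∈ Set.Icc (0:ℝ) 1 := ⟨hxI.1, hxI.2.trans (le_of_lt hν1)⟩
        have hwx : w x = 2 * (1 - ν) * x := by rw [hw x, if_pos hxI.2]
        have h1 : P x = ∑ j : Fin (p+1), (α j * x ^ (j:ℕ) + β j * w x * x ^ (j:ℕ)) :=
          hrep x hx01
        have h3 : ∑ j : Fin (p+1), (α j * x ^ (j:ℕ) + β j * w x * x ^ (j:ℕ))
            = Q'.eval x + w x * R'.eval x := by
          rw [Finset.sum_add_distrib, hQ'eval, hR'eval, Finset.mul_sum]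
          congr 1
          exact Finset.sum_congr rfl fun j _ => by ring
        have h2'' : P x = A.eval x := by rw [hAeval]; exact hP0 x hxI
        have h4 := (h2''.symm.trans (h1.trans h3))
        rw [hwx] at h4
        simp only [Polynomial.IsRoot, Polynomial.eval_sub, Polynomial.eval_add,
          Polynomial.eval_mul, Polynomial.eval_ofNat, Polynomial.eval_one,
          Polynomial.eval_C, Polynomial.eval_X, Set.mem_setOf_eq]
        rw [h4]; ring
      have h0 : A - (Q' + 2 * (1 - C ν) * (X * R')) = 0 :=
        Polynomial.eq_zero_of_infinite_isRoot _
          (Set.Infinite.mono hroots (Set.Icc_infinite hν0))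
      exact sub_eq_zero.mp h0
    have E1 : B = Q' + 2 * C ν * ((1 - X) * R') := by
      have hroots : Set.Icc ν (1:ℝ) ⊆ {x | (B - (Q' + 2 * C ν * ((1 - X) * R'))).IsRoot x} := by
        intro x hxI
        have hx01 : x ∈ Set.Icc (0:ℝ) 1 := ⟨(le_of_lt hν0).trans hxI.1, hxI.2⟩
        have h1 : P x = ∑ j : Fin (p+1), (α j * x ^ (j:ℕ) + β j * w x * x ^ (j:ℕ)) :=
          hrep x hx01
        have h3 : ∑ j : Fin (p+1), (α j * x ^ (j:ℕ) + β j * w x * x ^ (j:ℕ))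
            = Q'.eval x + w x * R'.eval x := by
          rw [Finset.sum_add_distrib, hQ'eval, hR'eval, Finset.mul_sum]
          congr 1
          exact Finset.sum_congr rfl fun j _ => by ring
        have h2'' : P x = B.eval x := by rw [hBeval]; exact hP1 x hxI
        have h4 := (h2''.symm.trans (h1.trans h3))
        have hwx : w x = 2 * ν * (1 - x) := by
          rcases eq_or_lt_of_le hxI.1 with h | h
          · rw [hw x, ← h]
            split <;> ring
          · rw [hw x, if_neg (not_le.mpr h)]
        rw [hwx] at h4
        simp only [Polynomial.IsRoot, Polynomial.eval_sub, Polynomial.eval_add,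
          Polynomial.eval_mul, Polynomial.eval_ofNat, Polynomial.eval_one,
          Polynomial.eval_C, Polynomial.eval_X, Set.mem_setOf_eq]
        rw [h4]; ring
      have h0 : B - (Q' + 2 * C ν * ((1 - X) * R')) = 0 :=
        Polynomial.eq_zero_of_infinite_isRoot _
          (Set.Infinite.mono hroots (Set.Icc_infinite hν1))
      exact sub_eq_zero.mp h0
    have key' : 2 * (X - C ν) * R' = A - B := by
      rw [E0, E1]; ring
    have hRR : R' = R := by
      have hmul : (2 * (X - C ν) : ℝ[X]) * R' = (2 * (X - C ν) : ℝ[X]) * R := by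
        rw [key', key]
      have hne : (2 * (X - C ν) : ℝ[X]) ≠ 0 :=
        mul_ne_zero two_ne_zero hXν
      exact mul_left_cancel₀ hne hmul
    have hQQ : Q' = Q := by
      have : Q' = A - 2 * (1 - C ν) * (X * R') := by rw [E0]; ring
      rw [this, hRR, hQdef]
    have hα : α = fun j : Fin (p+1) => Q.coeff (j : ℕ) := by
      funext j
      rw [← hQQ, hQ'def]
      exact (sgfem_coeff_fin p α j).symm
    have hβ : β = fun j : Fin (p+1) => R.coeff (j : ℕ) := by
      funext j
      rw [← hRR, hR'def]
      exact (sgfem_coeff_fin p β j).symm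
    simp only [Prod.mk.injEq]
    exact ⟨hα, hβ⟩
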